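/- arXiv:2110.03549 — 3 statements merged into one kernel-verified Lean document; each statement's English description precedes it below -/
import Mathlib

section
/- With the notation of the Gumbel-Softmax estimator, for f : [0,1] → ℝ continuously differentiable, lim_{τ → 0+} ∫_0^1 f'(v) p_z(η - τ logit(v)) dv = (f(1) - f(0)) · p_z(η), i.e., the Gumbel-Softmax estimator is asymptotically unbiased as the temperature τ → 0. -/
open Real MeasureTheory Filter Topology intervalIntegral

noncomputable def pz (t : ℝ) : ℝ := exp (-t) / (1 + exp (-t))^2

noncomputable def logit (v : ℝ) : ℝ := Real.log (v / (1 - v))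

lemma pz_continuous : Continuous pz := by
  unfold pz
  refine Continuous.div (by continuity) (by continuity) ?_
  intro t
  positivity

lemma pz_nonneg (t : ℝ) : 0 ≤ pz t := by
  unfold pz; positivity

lemma pz_le_one (t : ℝ) : pz t ≤ 1 := by
  unfold pz
  rw [div_le_one (by positivity)]
  nlinarith [exp_pos (-t), sq_nonneg (exp (-t))]

lemma logit_measurable : Measurable logit := by
  unfold logit
  exact (measurable_id.div (measurable_const.sub measurable_id)).log

/-- the Gumbel-Softmax estimator is asymptotically unbiased as `τ → 0+`. -/
theorem gs_asymptotically_unbiased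
    (f : ℝ → ℝ) (hf : ContDiffOn ℝ 1 f (Set.Icc 0 1)) (η : ℝ) :
    Tendsto (fun τ : ℝ => ∫ v in (0:ℝ)..1, deriv f v * pz (η - τ * logit v))
      (𝓝[>] 0) (𝓝 ((f 1 - f 0) * pz η)) := by
  set g : ℝ → ℝ := derivWithin f (Set.Icc 0 1) with hg
  have hgc : ContinuousOn g (Set.Icc 0 1) :=
    hf.continuousOn_derivWithin (uniqueDiffOn_Icc one_pos) le_rfl
  obtain ⟨M, hM⟩ := (isCompact_Icc (a := (0:ℝ)) (b := 1)).exists_bound_of_continuousOn hgc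
  have hderivEq : ∀ x ∈ Set.Ioo (0:ℝ) 1, deriv f x = g x := by
    intro x hx
    have hmem : Set.Icc (0:ℝ) 1 ∈ 𝓝 x := Icc_mem_nhds hx.1 hx.2
    exact (derivWithin_of_mem_nhds hmem).symm
  have hderiv : ∀ x ∈ Set.Ioo (0:ℝ) 1, HasDerivAt f (g x) x := by
    intro x hx
    have hmem : Set.Icc (0:ℝ) 1 ∈ 𝓝 x := Icc_mem_nhds hx.1 hx.2
    have hd : DifferentiableAt ℝ f x :=
      ((hf.differentiableOn one_ne_zero) x (Set.Ioo_subset_Icc_self hx)).differentiableAt hmem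
    have h1 : g x = deriv f x := (hderivEq x hx).symm
    rw [h1]
    exact hd.hasDerivAt
  have hgint : IntervalIntegrable g volume 0 1 :=
    (hgc.mono (by rw [Set.uIcc_of_le zero_le_one])).intervalIntegrable
  have hFTC : (∫ v in (0:ℝ)..1, g v) = f 1 - f 0 :=
    intervalIntegral.integral_eq_sub_of_hasDeriv_right_of_le zero_le_one
      hf.continuousOn (fun x hx => (hderiv x hx).hasDerivWithinAt) hgint
  -- a.e. facts
  have hne1 : ∀ᵐ v : ℝ, v ≠ 1 := by
    have : (volume : Measure ℝ) {(1:ℝ)} = 0 := measure_singleton 1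
    rw [ae_iff]
    simpa using this
  -- rewrite each interval integral as a set integral of g
  have hEq : ∀ τ : ℝ, (∫ v in (0:ℝ)..1, deriv f v * pz (η - τ * logit v))
      = ∫ v in Set.Ioc (0:ℝ) 1, g v * pz (η - τ * logit v) := by
    intro τ
    rw [intervalIntegral.integral_of_le zero_le_one]
    refine setIntegral_congr_ae measurableSet_Ioc ?_
    filter_upwards [hne1] with v hv hv'
    have hvIoo : v ∈ Set.Ioo (0:ℝ) 1 := ⟨hv'.1, lt_of_le_of_ne hv'.2 hv⟩
    rw [hderivEq v hvIoo]
  have hTarget : (∫ v in Set.Ioc (0:ℝ) 1, g v * pz η) = (f 1 - f 0) * pz η := by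
    rw [MeasureTheory.integral_mul_const, ← intervalIntegral.integral_of_le zero_le_one, hFTC]
  have hmain : Tendsto (fun τ : ℝ => ∫ v in Set.Ioc (0:ℝ) 1, g v * pz (η - τ * logit v))
      (𝓝[>] 0) (𝓝 (∫ v in Set.Ioc (0:ℝ) 1, g v * pz η)) := by
    refine MeasureTheory.tendsto_integral_filter_of_dominated_convergence
      (fun _ => M) ?_ ?_ ?_ ?_
    · refine Filter.Eventually.of_forall fun τ => ?_
      exact ((hgc.mono Set.Ioc_subset_Icc_self).aestronglyMeasurable measurableSet_Ioc).mul
        ((pz_continuous.measurable.comp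
          (measurable_const.sub (logit_measurable.const_mul τ))).aestronglyMeasurable)
    · refine Filter.Eventually.of_forall fun τ => ?_
      rw [ae_restrict_iff' measurableSet_Ioc]
      refine Filter.Eventually.of_forall fun v hv => ?_
      have h1 : ‖g v‖ ≤ M := hM v (Set.Ioc_subset_Icc_self hv)
      have h2 : ‖pz (η - τ * logit v)‖ ≤ 1 := by
        rw [Real.norm_eq_abs, abs_of_nonneg (pz_nonneg _)]
        exact pz_le_one _
      calc ‖g v * pz (η - τ * logit v)‖ = ‖g v‖ * ‖pz (η - τ * logit v)‖ := norm_mul _ _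
        _ ≤ M * 1 := mul_le_mul h1 h2 (norm_nonneg _) ((norm_nonneg _).trans h1)
        _ = M := mul_one M
    · exact (integrableOn_const_iff (by simp)).mpr (Or.inr (by simp))
    · refine Filter.Eventually.of_forall fun v => ?_
      have h1 : Tendsto (fun τ : ℝ => η - τ * logit v) (𝓝[>] 0) (𝓝 η) := by
        have : Tendsto (fun τ : ℝ => η - τ * logit v) (𝓝 0) (𝓝 (η - 0 * logit v)) := by
          exact (tendsto_const_nhds.sub (tendsto_id.mul tendsto_const_nhds))
        simpa using this.mono_left nhdsWithin_le_nhds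
      exact Tendsto.const_mul (g v) ((pz_continuous.tendsto η).comp h1)
  rw [← hTarget]
  exact hmain.congr (fun τ => (hEq τ).symm)
end

section
/- The second moment of the Gumbel-Softmax gradient estimator satisfies E[ĝ²_{GS(τ)}] = (1/τ) ∫_0^1 f'(v)² v(1-v) p_z(η - τ logit(v)) dv, where the expectation is over standard logistic z and ĝ_{GS(τ)} = f'(σ_τ(η-z))·σ_τ(η-z)(1-σ_τ(η-z))/τ. -/
open Real MeasureTheory intervalIntegral

noncomputable def sigTau (τ t : ℝ) : ℝ := 1 / (1 + exp (-t / τ))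

/-- second moment of the Gumbel-Softmax gradient estimator. -/
theorem gs_second_moment
    (f : ℝ → ℝ) (hf : ContDiffOn ℝ 1 f (Set.Icc 0 1))
    (η τ : ℝ) (hτ : 0 < τ) :
    (∫ z : ℝ, (deriv f (sigTau τ (η - z)) * (sigTau τ (η - z) * (1 - sigTau τ (η - z)) / τ))^2 * pz z)
      = (1 / τ) * ∫ v in (0:ℝ)..1, (deriv f v)^2 * (v * (1 - v)) * pz (η - τ * logit v) := by
  have hτ' : τ ≠ 0 := ne_of_gt hτ
  set φ : ℝ → ℝ := fun z => sigTau τ (η - z) with hφdef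
  set F : ℝ → ℝ := fun v => (deriv f v)^2 * (v * (1 - v)) * pz (η - τ * logit v) with hFdef
  -- basic facts about φ
  have hφeq : ∀ z, φ z = (1 + exp ((z - η) / τ))⁻¹ := by
    intro z
    simp only [hφdef, sigTau, one_div]
    ring_nf
  have hEpos : ∀ z : ℝ, 0 < 1 + exp ((z - η) / τ) := fun z => by positivity
  have hφpos : ∀ z, 0 < φ z := by
    intro z; rw [hφeq z]; positivity
  have hφlt : ∀ z, φ z < 1 := by
    intro z; rw [hφeq z]
    rw [inv_lt_one_iff₀]
    right; linarith [Real.exp_pos ((z - η) / τ)]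
  have h1mφ : ∀ z, 1 - φ z = exp ((z - η) / τ) / (1 + exp ((z - η) / τ)) := by
    intro z; rw [hφeq z]
    field_simp
    ring
  have hprod : ∀ z, φ z * (1 - φ z) = exp ((z - η) / τ) / (1 + exp ((z - η) / τ))^2 := by
    intro z; rw [hφeq z]
    field_simp [(hEpos z).ne']
    ring
  -- derivative of φ
  have hderiv : ∀ z, HasDerivAt φ (-(φ z * (1 - φ z)) / τ) z := by
    intro z
    have h1 : HasDerivAt (fun z : ℝ => (z - η) / τ) (1 / τ) z := by
      simpa using ((hasDerivAt_id z).sub_const η).div_const τ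
    have h2 : HasDerivAt (fun z : ℝ => 1 + exp ((z - η) / τ))
        (exp ((z - η) / τ) * (1 / τ)) z := ((h1.exp).const_add 1)
    have h3 : HasDerivAt (fun z : ℝ => (1 + exp ((z - η) / τ))⁻¹)
        (-(exp ((z - η) / τ) * (1 / τ)) / (1 + exp ((z - η) / τ))^2) z :=
      h2.inv (ne_of_gt (hEpos z))
    have heq : φ = fun z : ℝ => (1 + exp ((z - η) / τ))⁻¹ := funext hφeq
    rw [heq]
    convert h3 using 1
    field_simp [(hEpos z).ne']
    ring
  -- injectivity
  have hanti : StrictAnti φ := by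
    intro a b hab
    rw [hφeq a, hφeq b]
    apply inv_strictAnti₀ (hEpos a)
    have : (a - η) / τ < (b - η) / τ := by gcongr <;> linarith
    linarith [Real.exp_lt_exp.mpr this]
  have hinj : Function.Injective φ := hanti.injective
  -- logit of φ
  have hlogit : ∀ z, logit (φ z) = (η - z) / τ := by
    intro z
    have h0 : φ z / (1 - φ z) = exp (-((z - η) / τ)) := by
      rw [h1mφ z, hφeq z, Real.exp_neg]
      field_simp [(hEpos z).ne', Real.exp_ne_zero]
    simp only [logit, h0, Real.log_exp]
    ring
  -- image of φ is (0,1)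
  have himg : φ '' Set.univ = Set.Ioo 0 1 := by
    apply Set.eq_of_subset_of_subset
    · rintro v ⟨z, -, rfl⟩
      exact ⟨hφpos z, hφlt z⟩
    · rintro v ⟨hv0, hv1⟩
      refine ⟨η - τ * logit v, trivial, ?_⟩
      have hv1' : 0 < 1 - v := by linarith
      have hvr : 0 < v / (1 - v) := div_pos hv0 hv1'
      simp only [hφdef, sigTau]
      have h1 : η - (η - τ * logit v) = τ * logit v := by ring
      rw [h1]
      have h2 : -(τ * logit v) / τ = -logit v := by field_simp
      rw [h2]
      rw [show -logit v = Real.log ((1 - v) / v) by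
        rw [logit, ← Real.log_inv]; congr 1; field_simp]
      rw [Real.exp_log (div_pos hv1' hv0)]
      field_simp
      ring
  -- change of variables
  have key := integral_image_eq_integral_abs_deriv_smul MeasurableSet.univ
      (fun x (_ : x ∈ Set.univ) => (hderiv x).hasDerivWithinAt) hinj.injOn F
  rw [himg, Measure.restrict_univ] at key
  -- pointwise identity for the integrand
  have hpt : ∀ z : ℝ,
      (deriv f (φ z) * (φ z * (1 - φ z) / τ))^2 * pz z
        = (1 / τ) * (|(-(φ z * (1 - φ z)) / τ)| • F (φ z)) := by
    intro z
    have habs : |(-(φ z * (1 - φ z)) / τ)| = φ z * (1 - φ z) / τ := by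
      rw [abs_div, abs_neg, abs_of_pos hτ,
        abs_of_pos (mul_pos (hφpos z) (by linarith [hφlt z]))]
    rw [habs]
    simp only [hFdef, smul_eq_mul, hlogit z]
    have hz : η - τ * ((η - z) / τ) = z := by field_simp; ring
    rw [hz]
    field_simp
  calc (∫ z : ℝ, (deriv f (φ z) * (φ z * (1 - φ z) / τ))^2 * pz z)
      = ∫ z : ℝ, (1 / τ) * (|(-(φ z * (1 - φ z)) / τ)| • F (φ z)) := by
        exact congrArg _ (funext hpt)
    _ = (1 / τ) * ∫ z : ℝ, |(-(φ z * (1 - φ z)) / τ)| • F (φ z) :=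
        integral_const_mul _ _
    _ = (1 / τ) * ∫ v in Set.Ioo (0:ℝ) 1, F v := by rw [← key]
    _ = (1 / τ) * ∫ v in (0:ℝ)..1, F v := by
        rw [intervalIntegral.integral_of_le zero_le_one,
          MeasureTheory.integral_Ioc_eq_integral_Ioo]
end

section
/- There exist a differentiable function f and p ∈ (0,1) such that the DARN estimator has strictly larger bias than the straight-through estimator: for f smooth with f'(-1) = -1, f'(1) = 1, f(1)-f(-1) = 2a with a = 0.9, and p = 0.95, the ST estimator expectation 2((1-p)f'(-1) + p f'(1)) = 2(2p-1) equals the true gradient 2a exactly (bias 0), while the DARN expectation f'(1)+f'(-1) = 0 has bias 2a = 1.8. -/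
lemma aux_deriv (x : ℝ) :
    deriv (fun x : ℝ => x^2/2 - (9/20)*x^3 + (27/20)*x) x
      = x - (9/20)*(3*x^2) + 27/20 := by
  have h : HasDerivAt (fun x : ℝ => x^2/2 - (9/20)*x^3 + (27/20)*x)
      (x - (9/20)*(3*x^2) + 27/20) x := by
    have h1 : HasDerivAt (fun x : ℝ => x^2/2) (2*x^(2-1)/2) x :=
      (hasDerivAt_pow 2 x).div_const 2
    have h2 : HasDerivAt (fun x : ℝ => (9/20)*x^3) ((9/20)*(3*x^(3-1))) x :=
      (hasDerivAt_pow 3 x).const_mul (9/20)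
    have h3 : HasDerivAt (fun x : ℝ => (27/20)*x) ((27/20)*1) x :=
      (hasDerivAt_id x).const_mul (27/20)
    refine ((h1.sub h2).add h3).congr_deriv ?_
    norm_num
  exact h.deriv

/-- there exist a differentiable `f` and `p ∈ (0,1)` (namely with
`f'(-1) = -1`, `f'(1) = 1`, `f(1)-f(-1) = 2·0.9`, `p = 0.95`) for which the ST
estimator is exactly unbiased while the DARN estimator has bias `1.8`. -/
theorem darn_can_have_larger_bias_than_st :
    ∃ f : ℝ → ℝ, Differentiable ℝ f ∧
      deriv f (-1) = -1 ∧ deriv f 1 = 1 ∧ f 1 - f (-1) = 2 * (9/10) ∧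
      ∃ p : ℝ, p ∈ Set.Ioo (0:ℝ) 1 ∧ p = 19/20 ∧
        |2 * ((1 - p) * deriv f (-1) + p * deriv f 1) - (f 1 - f (-1))| = 0 ∧
        |(deriv f 1 + deriv f (-1)) - (f 1 - f (-1))| = 2 * (9/10) ∧
        |(deriv f 1 + deriv f (-1)) - (f 1 - f (-1))|
          > |2 * ((1 - p) * deriv f (-1) + p * deriv f 1) - (f 1 - f (-1))| := by
  refine ⟨fun x : ℝ => x^2/2 - (9/20)*x^3 + (27/20)*x, ?_, ?_, ?_, ?_, 19/20,
    ⟨by norm_num, by norm_num⟩, rfl, ?_, ?_, ?_⟩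
  · fun_prop
  · rw [aux_deriv]; norm_num
  · rw [aux_deriv]; norm_num
  · norm_num
  · rw [aux_deriv, aux_deriv]; norm_num
  · rw [aux_deriv, aux_deriv]; norm_num
  · rw [aux_deriv, aux_deriv]; norm_num
end
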